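/- Let u, v ∈ ℕ and let A be a u × v matrix with rational entries such that for each a ∈ ℤ there exists x⃗ ∈ ℤ^v with A x⃗ = (a, ..., a) ∈ ℤ^u. If B ⊆ ℤ is a CR-set, then {y⃗ ∈ ℤ^v : A y⃗ ∈ B^u} is a CR-set in ℤ^v. -/

import Mathlib

/-- `A` is a CR-set: for each `k` there is `r` such that every set of at most `k`
sequences has a sum-witness inside `{1,…,r}` landing in `A`. -/
def CRSet {S : Type*} [AddCommMonoid S] (A : Set S) : Prop :=
  ∀ k : ℕ, ∃ r : ℕ, ∀ F : Finset (ℕ → S), F.card ≤ k →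
    ∃ (a : S) (H : Finset ℕ), H.Nonempty ∧ H ⊆ Finset.Icc 1 r ∧
      ∀ f ∈ F, a + ∑ t ∈ H, f t ∈ A

/-- if a `u × v` rational matrix `A` hits every constant integer vector
and `B ⊆ ℤ` is a CR-set, then `{y ∈ ℤ^v : A y ∈ B^u}` is a CR-set in `ℤ^v`. -/
theorem stmt9 (u v : ℕ) (A : Matrix (Fin u) (Fin v) ℚ)
    (hA : ∀ a : ℤ, ∃ x : Fin v → ℤ,
      ∀ i : Fin u, A.mulVec (fun j => (x j : ℚ)) i = (a : ℚ))
    (B : Set ℤ) (hB : CRSet B) :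
    CRSet {y : Fin v → ℤ |
      ∀ i : Fin u, ∃ b ∈ B, A.mulVec (fun j => (y j : ℚ)) i = (b : ℚ)} := by
  classical
  intro k
  -- `c` is a common denominator for the entries of `A`
  set c : ℕ := ∏ i : Fin u, ∏ j : Fin v, (A i j).den with hcdef
  have hc0 : 0 < c := Finset.prod_pos fun i _ => Finset.prod_pos fun j _ => (A i j).pos
  -- the integer matrix `M = c • A`
  have hMex : ∀ i j, ∃ z : ℤ, (c : ℚ) * A i j = (z : ℚ) := by
    intro i j
    have hd : (A i j).den ∣ c :=
      dvd_trans (Finset.dvd_prod_of_mem (fun j => (A i j).den) (Finset.mem_univ j))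
        (Finset.dvd_prod_of_mem (fun i => ∏ j : Fin v, (A i j).den) (Finset.mem_univ i))
    obtain ⟨e, he⟩ := hd
    refine ⟨e * (A i j).num, ?_⟩
    have h1 : ((A i j).den : ℚ) * A i j = ((A i j).num : ℚ) := by
      rw [mul_comm]; exact_mod_cast Rat.mul_den_eq_num (A i j)
    rw [he]
    push_cast
    rw [mul_comm ((A i j).den : ℚ) (e : ℚ), mul_assoc, h1]
  choose M hM using hMex
  set Mz : Matrix (Fin u) (Fin v) ℤ := Matrix.of M with hMzdef
  -- key scaling identity
  have key : ∀ (y : Fin v → ℤ) (i : Fin u),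
      (c : ℚ) * A.mulVec (fun j => (y j : ℚ)) i = (Mz.mulVec y i : ℚ) := by
    intro y i
    simp only [Matrix.mulVec, dotProduct, Finset.mul_sum]
    push_cast
    refine Finset.sum_congr rfl fun j _ => ?_
    rw [← mul_assoc, hM]
    rfl
  set N : ℕ := c ^ (k * u) with hNdef
  have hN0 : 0 < N := pow_pos hc0 _
  obtain ⟨r₀, hr₀⟩ := hB (k * u)
  refine ⟨r₀ * N, ?_⟩
  intro F hF
  -- partial sums
  set S : (ℕ → Fin v → ℤ) → ℕ → (Fin v → ℤ) := fun f t => ∑ s ∈ Finset.Ioc 0 t, f s with hSdef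
  -- pigeonhole: in each window of length `N` there are two indices where all scaled
  -- partial sums agree mod `c`
  have pigeon : ∀ m : ℕ, ∃ t₁ t₂ : ℕ, m * N ≤ t₁ ∧ t₁ < t₂ ∧ t₂ ≤ (m + 1) * N ∧
      ∀ f ∈ F, ∀ i : Fin u,
        (c : ℤ) ∣ Mz.mulVec (S f t₂) i
          - Mz.mulVec (S f t₁) i := by
    intro m
    haveI : NeZero c := ⟨hc0.ne'⟩
    set Φ : ℕ → (↥F → Fin u → ZMod c) :=
      fun t f i => ((Mz.mulVec (S f.1 t) i : ℤ) : ZMod c) with hΦ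
    have hcard : Fintype.card (↥F → Fin u → ZMod c) < (Finset.Icc (m * N) ((m + 1) * N)).card := by
      rw [Nat.card_Icc]
      have h1 : (m + 1) * N = m * N + N := by ring
      have h2 : Fintype.card (↥F → Fin u → ZMod c) = c ^ (u * F.card) := by
        simp [ZMod.card, ← pow_mul]
      rw [h2]
      have h3 : c ^ (u * F.card) ≤ c ^ (k * u) :=
        Nat.pow_le_pow_right hc0 ((Nat.mul_le_mul le_rfl hF).trans_eq (mul_comm u k))
      omega
    obtain ⟨x, hx, y, hy, hxy, hΦxy⟩ :=
      Finset.exists_ne_map_eq_of_card_lt_of_maps_to hcard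
        (fun t _ => Finset.mem_univ (Φ t))
    simp only [Finset.mem_Icc] at hx hy
    have main : ∀ x y : ℕ, x < y → m * N ≤ x → y ≤ (m+1) * N → Φ x = Φ y →
        ∃ t₁ t₂ : ℕ, m * N ≤ t₁ ∧ t₁ < t₂ ∧ t₂ ≤ (m + 1) * N ∧
        ∀ f ∈ F, ∀ i : Fin u,
          (c : ℤ) ∣ Mz.mulVec (S f t₂) i
            - Mz.mulVec (S f t₁) i := by
      intro x y hlt hxl hyu he
      refine ⟨x, y, hxl, hlt, hyu, fun f hf i => ?_⟩
      have := congrFun (congrFun he ⟨f, hf⟩) i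
      rw [← ZMod.intCast_zmod_eq_zero_iff_dvd]
      push_cast
      rw [sub_eq_zero]
      exact this.symm
    rcases lt_or_gt_of_ne hxy with h | h
    · exact main x y h hx.1 hy.2 hΦxy
    · exact main y x h hy.1 hx.2 hΦxy.symm
  choose t₁ t₂ ht₁ htlt ht₂ hdvd using pigeon
  -- the blocks
  set I : ℕ → Finset ℕ := fun m => Finset.Ioc (t₁ (m - 1)) (t₂ (m - 1)) with hIdef
  set g : (ℕ → Fin v → ℤ) → ℕ → (Fin v → ℤ) := fun f m => ∑ s ∈ I m, f s with hgdef
  have hgS : ∀ f m, S f (t₁ (m - 1)) + g f m = S f (t₂ (m - 1)) := by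
    intro f m
    exact Finset.sum_Ioc_consecutive f (Nat.zero_le _) (le_of_lt (htlt (m - 1)))
  have hgdvd : ∀ f ∈ F, ∀ (i : Fin u) (m : ℕ),
      (c : ℤ) ∣ Mz.mulVec (g f m) i := by
    intro f hf i m
    have h1 : g f m = S f (t₂ (m - 1)) - S f (t₁ (m - 1)) := by
      rw [← hgS f m]; abel
    rw [h1, Matrix.mulVec_sub]
    exact hdvd (m - 1) f hf i
  -- integer sequences fed to `hB`
  set h : (ℕ → Fin v → ℤ) → Fin u → ℕ → ℤ :=
    fun f i m => (Mz.mulVec (g f m) i) / c with hhdef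
  have hgh : ∀ f ∈ F, ∀ (i : Fin u) (m : ℕ),
      A.mulVec (fun j => ((g f m) j : ℚ)) i = (h f i m : ℚ) := by
    intro f hf i m
    have hcQ : (c : ℚ) ≠ 0 := by positivity
    apply mul_left_cancel₀ hcQ
    rw [key]
    have : (h f i m) * c = Mz.mulVec (g f m) i :=
      Int.ediv_mul_cancel (hgdvd f hf i m)
    rw [mul_comm (c : ℚ)]
    exact_mod_cast this.symm
  set F' : Finset (ℕ → ℤ) :=
    (F ×ˢ (Finset.univ : Finset (Fin u))).image (fun p => h p.1 p.2) with hF'def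
  have hF'card : F'.card ≤ k * u := by
    refine le_trans Finset.card_image_le ?_
    rw [Finset.card_product, Finset.card_univ, Fintype.card_fin]
    exact Nat.mul_le_mul_right u hF
  obtain ⟨a, H, Hne, Hsub, hHB⟩ := hr₀ F' hF'card
  obtain ⟨x, hx⟩ := hA a
  set K : Finset ℕ := H.biUnion I with hKdef
  have hHmem : ∀ m ∈ H, 1 ≤ m ∧ m ≤ r₀ := by
    intro m hm
    have := Hsub hm
    rw [Finset.mem_Icc] at this
    exact this
  have hIsub : ∀ m ∈ H, I m ⊆ Finset.Ioc ((m - 1) * N) (m * N) := by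
    intro m hm
    obtain ⟨hm1, _⟩ := hHmem m hm
    intro x hxI
    rw [Finset.mem_Ioc] at hxI ⊢
    constructor
    · exact lt_of_le_of_lt (ht₁ (m - 1)) hxI.1
    · refine le_trans hxI.2 (le_trans (ht₂ (m - 1)) ?_)
      have : (m - 1) + 1 = m := by omega
      rw [this]
  have hdisj : (H : Set ℕ).PairwiseDisjoint I := by
    intro m hm m' hm' hne
    have h1 := hIsub m hm
    have h2 := hIsub m' hm'
    simp only [Function.onFun]
    rw [Finset.disjoint_left]
    intro x hxm hxm'
    have e1 := Finset.mem_Ioc.mp (h1 hxm)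
    have e2 := Finset.mem_Ioc.mp (h2 hxm')
    rcases lt_or_gt_of_ne hne with hlt | hlt
    · have : m * N ≤ (m' - 1) * N := Nat.mul_le_mul_right N (by omega)
      omega
    · have : m' * N ≤ (m - 1) * N := Nat.mul_le_mul_right N (by omega)
      omega
  refine ⟨x, K, ?_, ?_, ?_⟩
  · obtain ⟨m, hm⟩ := Hne
    exact ⟨t₂ (m - 1), Finset.mem_biUnion.mpr ⟨m, hm, Finset.mem_Ioc.mpr ⟨htlt (m - 1), le_refl _⟩⟩⟩
  · intro x hxK
    obtain ⟨m, hm, hxI⟩ := Finset.mem_biUnion.mp hxK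
    obtain ⟨_, hm2⟩ := hHmem m hm
    have := Finset.mem_Ioc.mp (hIsub m hm hxI)
    rw [Finset.mem_Icc]
    constructor
    · omega
    · exact le_trans this.2 (Nat.mul_le_mul_right N hm2)
  · intro f hf
    simp only [Set.mem_setOf_eq]
    intro i
    refine ⟨a + ∑ m ∈ H, h f i m, ?_, ?_⟩
    · apply hHB
      exact Finset.mem_image.mpr ⟨(f, i), Finset.mem_product.mpr ⟨hf, Finset.mem_univ i⟩, rfl⟩
    · have hsumK : ∑ t ∈ K, f t = ∑ m ∈ H, g f m := Finset.sum_biUnion hdisj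
      have hcast : (fun j => (((x + ∑ t ∈ K, f t) j : ℤ) : ℚ))
          = (fun j => ((x j : ℤ) : ℚ)) + ∑ m ∈ H, (fun j => (((g f m) j : ℤ) : ℚ)) := by
        funext j
        simp only [Pi.add_apply, Finset.sum_apply, hsumK]
        push_cast
        rfl
      rw [hcast, Matrix.mulVec_add]
      have hsum : A.mulVec (∑ m ∈ H, fun j => (((g f m) j : ℤ) : ℚ)) i
          = ∑ m ∈ H, A.mulVec (fun j => (((g f m) j : ℤ) : ℚ)) i := by
        rw [← Matrix.mulVecLin_apply]
        rw [map_sum]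
        simp [Matrix.mulVecLin_apply]
      simp only [Pi.add_apply]
      rw [hsum, hx i]
      push_cast
      congr 1
      refine Finset.sum_congr rfl fun m _ => ?_
      exact hgh f hf i m
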